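/- Define Z_th = (1/k)·(1 - ∏_{i=1}^k (1 - (1/2)(1 - √(1 - Z_i²)))) where each Z_i ∈ [0,1] and k ≥ 1. Then 0 ≤ Z_th ≤ max_i Z_i. -/

import Mathlib

lemma aux_one_sub_prod_le_sum {ι : Type*} (s : Finset ι) (f : ι → ℝ)
    (h0 : ∀ i ∈ s, 0 ≤ f i) (h1 : ∀ i ∈ s, f i ≤ 1) :
    1 - ∏ i ∈ s, (1 - f i) ≤ ∑ i ∈ s, f i := by
  classical
  induction s using Finset.induction with
  | empty => simp
  | insert a s hx ih =>
    rw [Finset.prod_insert hx, Finset.sum_insert hx]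
    have h0' : ∀ i ∈ s, 0 ≤ f i := fun i hi => h0 i (Finset.mem_insert_of_mem hi)
    have h1' : ∀ i ∈ s, f i ≤ 1 := fun i hi => h1 i (Finset.mem_insert_of_mem hi)
    have ih' := ih h0' h1'
    have hP0 : (0:ℝ) ≤ ∏ i ∈ s, (1 - f i) :=
      Finset.prod_nonneg fun i hi => by linarith [h1' i hi]
    have hP1 : ∏ i ∈ s, (1 - f i) ≤ 1 :=
      Finset.prod_le_one (fun i hi => by linarith [h1' i hi])
        (fun i hi => by linarith [h0' i hi])
    have ha0 := h0 a (Finset.mem_insert_self a s)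
    nlinarith

/-- With `Z_th = (1/k)(1 - ∏_{i=1}^k (1 - (1/2)(1 - √(1 - (Z i)²))))`, each
`Z i ∈ [0,1]` and `k ≥ 1`, we have `0 ≤ Z_th ≤ max_i Z i`. -/
theorem stmt6 (k : ℕ) (hk : 1 ≤ k) (Z : Fin k → ℝ)
    (hZ0 : ∀ i, 0 ≤ Z i) (hZ1 : ∀ i, Z i ≤ 1)
    (hne : (Finset.univ : Finset (Fin k)).Nonempty) :
    0 ≤ (1 / (k : ℝ)) * (1 - ∏ i, (1 - (1 / 2) * (1 - Real.sqrt (1 - Z i ^ 2)))) ∧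
    (1 / (k : ℝ)) * (1 - ∏ i, (1 - (1 / 2) * (1 - Real.sqrt (1 - Z i ^ 2)))) ≤
      Finset.univ.sup' hne Z := by
  set a : Fin k → ℝ := fun i => (1 / 2) * (1 - Real.sqrt (1 - Z i ^ 2)) with ha
  have hsq : ∀ i, 0 ≤ Real.sqrt (1 - Z i ^ 2) := fun i => Real.sqrt_nonneg _
  have hsq1 : ∀ i, Real.sqrt (1 - Z i ^ 2) ≤ 1 := fun i => by
    exact Real.sqrt_le_one.mpr (by nlinarith [hZ0 i])
  have ha0 : ∀ i, 0 ≤ a i := fun i => by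
    have := hsq1 i; simp only [ha]; linarith
  have ha1 : ∀ i, a i ≤ 1 := fun i => by
    have := hsq i; simp only [ha]; linarith
  have haZ : ∀ i, a i ≤ Z i := fun i => by
    have h : (1 : ℝ) - 2 * Z i ≤ Real.sqrt (1 - Z i ^ 2) := by
      rcases le_or_gt (1 - 2 * Z i) 0 with h | h
      · exact h.trans (hsq i)
      · rw [show (1:ℝ) - 2 * Z i = Real.sqrt ((1 - 2 * Z i)^2) by
          rw [Real.sqrt_sq h.le]]
        exact Real.sqrt_le_sqrt (by nlinarith [hZ0 i, hZ1 i])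
    simp only [ha]; linarith
  have hk0 : (0:ℝ) < (k : ℝ) := by exact_mod_cast hk
  have hP0 : (0:ℝ) ≤ ∏ i, (1 - a i) :=
    Finset.prod_nonneg fun i _ => by linarith [ha1 i]
  have hP1 : ∏ i, (1 - a i) ≤ 1 :=
    Finset.prod_le_one (fun i _ => by linarith [ha1 i]) (fun i _ => by linarith [ha0 i])
  constructor
  · exact mul_nonneg (by positivity) (by linarith)
  · have hle : 1 - ∏ i, (1 - a i) ≤ ∑ i, a i :=
      aux_one_sub_prod_le_sum _ a (fun i _ => ha0 i) (fun i _ => ha1 i)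
    have hsum : ∑ i, a i ≤ ∑ _i : Fin k, Finset.univ.sup' hne Z := by
      apply Finset.sum_le_sum
      intro i _
      exact (haZ i).trans (Finset.le_sup' Z (Finset.mem_univ i))
    have hconst : ∑ _i : Fin k, Finset.univ.sup' hne Z = (k : ℝ) * Finset.univ.sup' hne Z := by
      simp [Finset.sum_const, mul_comm]
    rw [div_mul_eq_mul_div, one_mul, div_le_iff₀ hk0]
    calc 1 - ∏ i, (1 - a i) ≤ ∑ i, a i := hle
      _ ≤ (k : ℝ) * Finset.univ.sup' hne Z := by rw [← hconst]; exact hsum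
      _ = Finset.univ.sup' hne Z * (k:ℝ) := mul_comm _ _
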